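/- For the single-server queue with i.i.d. arrivals of generating function A, the full bivariate generating function equals Φ(u,z) = (1 + z A(u)(1 - 1/u)/(1 - T_A(z))) / (1 - z A(u)/u) for u ≠ 0 in the domain of convergence, where T_A(z) = z A(T_A(z)), T_A(0)=0. -/

import Mathlib

set_option linter.unusedSectionVars false
set_option maxHeartbeats 1000000

open MeasureTheory ProbabilityTheory

def queueY : ℕ → (ℕ → ℕ) → ℕ
  | 0, _ => 0
  | t + 1, f => (queueY t f - 1) + f (t + 1)

lemma queueY_congr : ∀ (t : ℕ) {f g : ℕ → ℕ},
    (∀ i ∈ Finset.Icc 1 t, f i = g i) → queueY t f = queueY t g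
  | 0, _, _, _ => rfl
  | t + 1, f, g, h => by
    have h1 : queueY t f = queueY t g :=
      queueY_congr t fun i hi => h i (Finset.Icc_subset_Icc_right (Nat.le_succ t) hi)
    have h2 : f (t + 1) = g (t + 1) := h (t + 1) (by simp)
    simp [queueY, h1, h2]

section Aux

variable {Ω : Type*} [MeasurableSpace Ω] {μ : Measure Ω} [IsProbabilityMeasure μ]
  {A : ℕ → Ω → ℕ} {X : ℕ → Ω → ℕ}

lemma queue_X_eq (hX0 : ∀ ω, X 0 ω = 0)
    (hXrec : ∀ t ω, X (t + 1) ω = (X t ω - 1) + A (t + 1) ω) :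
    ∀ t ω, X t ω = queueY t (fun i => A i ω) := by
  intro t
  induction t with
  | zero => intro ω; simp [queueY, hX0]
  | succ t ih => intro ω; rw [hXrec, ih]; rfl

lemma queue_X_meas (hmeas : ∀ t, Measurable (A t)) (hX0 : ∀ ω, X 0 ω = 0)
    (hXrec : ∀ t ω, X (t + 1) ω = (X t ω - 1) + A (t + 1) ω) (t : ℕ) :
    Measurable (X t) := by
  induction t with
  | zero =>
    have : X 0 = fun _ => 0 := funext hX0
    rw [this]; exact measurable_const
  | succ t ih =>
    have : X (t + 1) = fun ω => (X t ω - 1) + A (t + 1) ω := funext (hXrec t)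
    rw [this]
    exact (((measurable_of_countable (fun n : ℕ => n - 1)).comp ih).add (hmeas (t + 1)))

lemma queue_indep (hmeas : ∀ t, Measurable (A t))
    (hindep : iIndepFun A μ)
    (hX0 : ∀ ω, X 0 ω = 0)
    (hXrec : ∀ t ω, X (t + 1) ω = (X t ω - 1) + A (t + 1) ω) (t : ℕ) :
    IndepFun (X t) (A (t + 1)) μ := by
  classical
  set S : Finset ℕ := Finset.Icc 1 t with hS
  have hdisj : Disjoint S ({t + 1} : Finset ℕ) := by
    simp [hS, Finset.disjoint_singleton_right]
  have h := hindep.indepFun_finset S {t + 1} hdisj hmeas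
  let φ : (S → ℕ) → ℕ := fun v => queueY t (fun i => if h : i ∈ S then v ⟨i, h⟩ else 0)
  let ψ : (({t + 1} : Finset ℕ) → ℕ) → ℕ := fun v => v ⟨t + 1, by simp⟩
  have h2 := h.comp (φ := φ) (ψ := ψ) (measurable_of_countable φ) (measurable_of_countable ψ)
  have e1 : X t = φ ∘ (fun a (i : S) => A i a) := by
    funext ω
    rw [queue_X_eq hX0 hXrec]
    exact queueY_congr t fun i hi => by simp [hS, dif_pos, hi]
  have e2 : A (t + 1) = ψ ∘ (fun a (i : ({t + 1} : Finset ℕ)) => A i a) := rfl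
  rw [e1, e2]
  exact h2

/-- total mass one -/
lemma queue_tsum_one {f : Ω → ℕ} (hf : Measurable f) :
    ∑' n, μ {ω | f ω = n} = 1 := by
  have hdisj : Pairwise (Function.onFun Disjoint fun n => {ω | f ω = n}) := by
    intro m n hmn
    simp only [Function.onFun, Set.disjoint_left]
    intro ω h1 h2
    exact hmn (h1.symm.trans h2)
  have hm : ∀ n : ℕ, MeasurableSet {ω | f ω = n} := fun n => hf (measurableSet_singleton n)
  rw [← measure_iUnion hdisj hm]
  have : (⋃ n, {ω | f ω = n}) = Set.univ := by
    ext ω; simp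
  rw [this, measure_univ]

lemma queue_A_id (hmeas : ∀ t, Measurable (A t)) (hid : ∀ t, μ.map (A t) = μ.map (A 0))
    (t m : ℕ) : μ {ω | A t ω = m} = μ {ω | A 0 ω = m} := by
  have h1 : μ.map (A t) {m} = μ.map (A 0) {m} := by rw [hid]
  rwa [Measure.map_apply (hmeas t) (measurableSet_singleton m),
    Measure.map_apply (hmeas 0) (measurableSet_singleton m)] at h1

lemma queue_step (hmeas : ∀ t, Measurable (A t))
    (hindep : iIndepFun A μ)
    (hid : ∀ t, μ.map (A t) = μ.map (A 0))
    (hX0 : ∀ ω, X 0 ω = 0)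
    (hXrec : ∀ t ω, X (t + 1) ω = (X t ω - 1) + A (t + 1) ω) (t n : ℕ) :
    μ {ω | X (t + 1) ω = n}
      = ∑' p : ℕ × ℕ, if (p.1 - 1) + p.2 = n
          then μ {ω | X t ω = p.1} * μ {ω | A 0 ω = p.2} else 0 := by
  classical
  set S : ℕ × ℕ → Set Ω := fun p =>
    if (p.1 - 1) + p.2 = n then {ω | X t ω = p.1} ∩ {ω | A (t + 1) ω = p.2} else ∅ with hSdef
  have hset : {ω | X (t + 1) ω = n} = ⋃ p, S p := by
    ext ω
    simp only [Set.mem_iUnion, Set.mem_setOf_eq, hSdef]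
    constructor
    · intro h
      refine ⟨(X t ω, A (t + 1) ω), ?_⟩
      rw [if_pos (by rw [← hXrec t ω]; exact h)]
      exact ⟨rfl, rfl⟩
    · rintro ⟨p, hp⟩
      by_cases hc : (p.1 - 1) + p.2 = n
      · rw [if_pos hc] at hp
        obtain ⟨h1, h2⟩ := hp
        rw [hXrec t ω, h1, h2]
        exact hc
      · rw [if_neg hc] at hp
        exact absurd hp (Set.notMem_empty ω)
  have hXm := queue_X_meas hmeas hX0 hXrec t
  have hSm : ∀ p, MeasurableSet (S p) := by
    intro p
    simp only [hSdef]
    split_ifs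
    · exact (hXm (measurableSet_singleton _)).inter ((hmeas (t + 1)) (measurableSet_singleton _))
    · exact MeasurableSet.empty
  have hdisj : Pairwise (Function.onFun Disjoint S) := by
    intro p q hpq
    simp only [Function.onFun, hSdef]
    split_ifs with h1 h2 <;> try simp
    rw [Set.disjoint_left]
    rintro ω ⟨ha1, ha2⟩ ⟨hb1, hb2⟩
    exact hpq (Prod.ext (ha1.symm.trans hb1) (ha2.symm.trans hb2))
  rw [hset, measure_iUnion hdisj hSm]
  refine tsum_congr fun p => ?_
  simp only [hSdef]
  split_ifs with hc
  · have e1 : {ω | X t ω = p.1} = X t ⁻¹' {p.1} := rfl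
    have e2 : {ω | A (t + 1) ω = p.2} = A (t + 1) ⁻¹' {p.2} := rfl
    rw [e1, e2, (queue_indep hmeas hindep hX0 hXrec t).measure_inter_preimage_eq_mul
      {p.1} {p.2} (measurableSet_singleton _) (measurableSet_singleton _)]
    rw [← e2, queue_A_id hmeas hid]
  · exact measure_empty

end Aux

section GF
open scoped ENNReal NNReal

lemma ennreal_gf_step {q' qq β : ℕ → ℝ≥0∞}
    (hstep : ∀ n, q' n = ∑' p : ℕ × ℕ,
      if (p.1 - 1) + p.2 = n then qq p.1 * β p.2 else 0) (v : ℝ≥0∞) :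
    ∑' n, q' n * v ^ n = (∑' k, qq k * v ^ (k - 1)) * (∑' m, β m * v ^ m) := by
  calc ∑' n, q' n * v ^ n
      = ∑' n, ∑' p : ℕ × ℕ, (if (p.1 - 1) + p.2 = n then qq p.1 * β p.2 * v ^ n else 0) := by
        refine tsum_congr fun n => ?_
        rw [hstep n, ← ENNReal.tsum_mul_right]
        exact tsum_congr fun p => by split_ifs <;> simp
    _ = ∑' p : ℕ × ℕ, ∑' n, (if (p.1 - 1) + p.2 = n then qq p.1 * β p.2 * v ^ n else 0) :=
        ENNReal.tsum_comm
    _ = ∑' p : ℕ × ℕ, (qq p.1 * v ^ (p.1 - 1)) * (β p.2 * v ^ p.2) := by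
        refine tsum_congr fun p => ?_
        rw [tsum_eq_single ((p.1 - 1) + p.2) (fun b hb => if_neg fun h => hb h.symm),
          if_pos rfl, pow_add]
        ring
    _ = (∑' k, qq k * v ^ (k - 1)) * (∑' m, β m * v ^ m) := by
        rw [ENNReal.tsum_prod']
        simp_rw [ENNReal.tsum_mul_left, ENNReal.tsum_mul_right]

end GF

section Main
open scoped ENNReal NNReal

variable {Ω : Type*} [MeasurableSpace Ω] {μ : Measure Ω} [IsProbabilityMeasure μ]
  {A : ℕ → Ω → ℕ} {X : ℕ → Ω → ℕ}

/-- The key functional equation, for any `x ∈ (0,1]` and `z ∈ (0,1)`. -/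
lemma queue_main (hmeas : ∀ t, Measurable (A t))
    (hindep : iIndepFun A μ)
    (hid : ∀ t, μ.map (A t) = μ.map (A 0))
    (hX0 : ∀ ω, X 0 ω = 0)
    (hXrec : ∀ t ω, X (t + 1) ω = (X t ω - 1) + A (t + 1) ω)
    {x z : ℝ} (hx0 : 0 < x) (hx1 : x ≤ 1) (hz0 : 0 < z) (hz1 : z < 1) :
    (∑' t : ℕ, (∑' n : ℕ, (μ {ω | X t ω = n}).toReal * x ^ n) * z ^ t)
        * (1 - z * (∑' m : ℕ, (μ {ω | A 0 ω = m}).toReal * x ^ m) / x)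
      = 1 + z * (∑' m : ℕ, (μ {ω | A 0 ω = m}).toReal * x ^ m) * (1 - 1 / x)
          * (∑' t : ℕ, (μ {ω | X t ω = 0}).toReal * z ^ t) := by
  classical
  set q : ℕ → ℕ → ℝ≥0∞ := fun t n => μ {ω | X t ω = n} with hqdef
  set α : ℕ → ℝ≥0∞ := fun m => μ {ω | A 0 ω = m} with hαdef
  set v : ℝ≥0∞ := ENNReal.ofReal x with hvdef
  set w : ℝ≥0∞ := ENNReal.ofReal z with hwdef
  have hv1 : v ≤ 1 := ENNReal.ofReal_le_one.mpr hx1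
  have hw1 : w < 1 := ENNReal.ofReal_lt_one.mpr hz1
  have hvfin : v ≠ ∞ := ENNReal.ofReal_ne_top
  have hwfin : w ≠ ∞ := ENNReal.ofReal_ne_top
  have hqsum : ∀ t, ∑' n, q t n = 1 := fun t =>
    queue_tsum_one (queue_X_meas hmeas hX0 hXrec t)
  have hαsum : ∑' m, α m = 1 := queue_tsum_one (hmeas 0)
  have hqfin : ∀ t n, q t n ≠ ∞ := fun t n => measure_ne_top μ _
  have hαfin : ∀ m, α m ≠ ∞ := fun m => measure_ne_top μ _
  set f : ℕ → ℝ≥0∞ := fun t => ∑' n, q t n * v ^ n with hfdef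
  set g : ℕ → ℝ≥0∞ := fun t => ∑' k, q t k * v ^ (k - 1) with hgdef
  set Av : ℝ≥0∞ := ∑' m, α m * v ^ m with hAvdef
  -- bounds
  have hbnd : ∀ (c : ℕ → ℝ≥0∞), (∑' n, c n = 1) → ∀ e : ℕ → ℕ,
      ∑' n, c n * v ^ (e n) ≤ 1 := by
    intro c hc e
    calc ∑' n, c n * v ^ (e n) ≤ ∑' n, c n := by
          refine ENNReal.tsum_le_tsum fun n => ?_
          calc c n * v ^ (e n) ≤ c n * 1 := mul_le_mul_right (pow_le_one' hv1 _) _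
            _ = c n := mul_one _
      _ = 1 := hc
  have hf_le : ∀ t, f t ≤ 1 := fun t => hbnd (q t) (hqsum t) id
  have hg_le : ∀ t, g t ≤ 1 := fun t => hbnd (q t) (hqsum t) (· - 1)
  have hAv_le : Av ≤ 1 := hbnd α hαsum id
  have hf_fin : ∀ t, f t ≠ ∞ := fun t => ne_top_of_le_ne_top ENNReal.one_ne_top (hf_le t)
  have hg_fin : ∀ t, g t ≠ ∞ := fun t => ne_top_of_le_ne_top ENNReal.one_ne_top (hg_le t)
  have hAv_fin : Av ≠ ∞ := ne_top_of_le_ne_top ENNReal.one_ne_top hAv_le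
  -- one-step recursion
  have hstep : ∀ t, f (t + 1) = g t * Av := fun t =>
    ennreal_gf_step (fun n => queue_step hmeas hindep hid hX0 hXrec t n) v
  -- initial value
  have hq00 : q 0 0 = 1 := by
    have : {ω | X 0 ω = 0} = Set.univ := by ext ω; simp [hX0]
    simp [hqdef, this]
  have hq0s : ∀ n, q 0 (n + 1) = 0 := by
    intro n
    have : {ω | X 0 ω = n + 1} = ∅ := by ext ω; simp [hX0]
    simp [hqdef, this]
  have hf0 : f 0 = 1 := by
    have h := tsum_eq_zero_add' (f := fun n => q 0 n * v ^ n) ENNReal.summable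
    simpa [hq00, hq0s] using h
  -- pointwise splitting identity
  have hsplit : ∀ t, v * g t + q t 0 = f t + v * q t 0 := by
    intro t
    have hg : g t = q t 0 + ∑' k, q t (k + 1) * v ^ k := by
      have h := tsum_eq_zero_add' (f := fun k => q t k * v ^ (k - 1)) ENNReal.summable
      simpa using h
    have hf : f t = q t 0 + v * ∑' k, q t (k + 1) * v ^ k := by
      have h := tsum_eq_zero_add' (f := fun n => q t n * v ^ n) ENNReal.summable
      have h2 : ∑' (b : ℕ), q t (b + 1) * v ^ (b + 1) = v * ∑' k, q t (k + 1) * v ^ k := by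
        rw [← ENNReal.tsum_mul_left]
        exact tsum_congr fun k => by rw [pow_succ]; ring
      simp only [pow_zero, mul_one] at h
      rw [h2] at h
      exact h
    rw [hg, hf]; ring
  -- the three ENNReal generating functions in `z`
  set F : ℝ≥0∞ := ∑' t, f t * w ^ t with hFdef
  set G : ℝ≥0∞ := ∑' t, g t * w ^ t with hGdef
  set F0 : ℝ≥0∞ := ∑' t, q t 0 * w ^ t with hF0def
  have hfinsum : ∀ (c : ℕ → ℝ≥0∞), (∀ t, c t ≤ 1) → ∑' t, c t * w ^ t ≠ ∞ := by
    intro c hc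
    refine ne_top_of_le_ne_top (b := (1 - w)⁻¹) ?_ ?_
    · have hpos : (0 : ℝ≥0∞) < 1 - w := tsub_pos_of_lt hw1
      exact ENNReal.inv_ne_top.mpr hpos.ne'
    · rw [← ENNReal.tsum_geometric]
      refine ENNReal.tsum_le_tsum fun t => ?_
      calc c t * w ^ t ≤ 1 * w ^ t := mul_le_mul_left (hc t) _
        _ = w ^ t := one_mul _
  have hFfin : F ≠ ∞ := hfinsum f hf_le
  have hGfin : G ≠ ∞ := hfinsum g hg_le
  have hF0fin : F0 ≠ ∞ := by
    refine hfinsum (fun t => q t 0) fun t => ?_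
    rw [← hqsum t]
    exact ENNReal.le_tsum 0
  -- equation E1 : F = 1 + (w * Av) * G
  have hE1 : F = 1 + (w * Av) * G := by
    rw [hFdef, tsum_eq_zero_add' ENNReal.summable]
    congr 1
    · simp [hf0]
    · calc ∑' t, f (t + 1) * w ^ (t + 1)
          = ∑' t, (w * Av) * (g t * w ^ t) := by
            refine tsum_congr fun t => ?_
            rw [hstep t, pow_succ]; ring
        _ = (w * Av) * G := by rw [ENNReal.tsum_mul_left]
  -- equation E2 : v * G + F0 = F + v * F0
  have hE2 : v * G + F0 = F + v * F0 := by
    calc v * G + F0 = ∑' t, (v * g t + q t 0) * w ^ t := by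
          rw [hGdef, hF0def, ← ENNReal.tsum_mul_left, ← ENNReal.tsum_add]
          exact tsum_congr fun t => by ring
      _ = ∑' t, (f t + v * q t 0) * w ^ t := tsum_congr fun t => by rw [hsplit t]
      _ = F + v * F0 := by
          rw [hFdef, hF0def, ← ENNReal.tsum_mul_left, ← ENNReal.tsum_add]
          exact tsum_congr fun t => by ring
  -- real versions
  have hvR : v.toReal = x := ENNReal.toReal_ofReal hx0.le
  have hwR : w.toReal = z := ENNReal.toReal_ofReal hz0.le
  have hftR : ∀ t, (f t).toReal = ∑' n, (q t n).toReal * x ^ n := by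
    intro t
    rw [hfdef]
    rw [ENNReal.tsum_toReal_eq fun n => ENNReal.mul_ne_top (hqfin t n) (ENNReal.pow_ne_top hvfin)]
    exact tsum_congr fun n => by rw [ENNReal.toReal_mul, ENNReal.toReal_pow, hvR]
  have hFR : F.toReal = ∑' t : ℕ, (∑' n : ℕ, (q t n).toReal * x ^ n) * z ^ t := by
    rw [hFdef]
    rw [ENNReal.tsum_toReal_eq fun t => ENNReal.mul_ne_top (hf_fin t) (ENNReal.pow_ne_top hwfin)]
    exact tsum_congr fun t => by rw [ENNReal.toReal_mul, ENNReal.toReal_pow, hwR, hftR t]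
  have hF0R : F0.toReal = ∑' t : ℕ, (q t 0).toReal * z ^ t := by
    rw [hF0def]
    rw [ENNReal.tsum_toReal_eq fun t => ENNReal.mul_ne_top (hqfin t 0) (ENNReal.pow_ne_top hwfin)]
    exact tsum_congr fun t => by rw [ENNReal.toReal_mul, ENNReal.toReal_pow, hwR]
  have hAvR : Av.toReal = ∑' m : ℕ, (α m).toReal * x ^ m := by
    rw [hAvdef]
    rw [ENNReal.tsum_toReal_eq fun m => ENNReal.mul_ne_top (hαfin m) (ENNReal.pow_ne_top hvfin)]
    exact tsum_congr fun m => by rw [ENNReal.toReal_mul, ENNReal.toReal_pow, hvR]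
  -- real equations
  have hE1R : F.toReal = 1 + z * Av.toReal * G.toReal := by
    rw [hE1, ENNReal.toReal_add ENNReal.one_ne_top
      (ENNReal.mul_ne_top (ENNReal.mul_ne_top hwfin hAv_fin) hGfin),
      ENNReal.toReal_mul, ENNReal.toReal_mul, ENNReal.toReal_one, hwR]
  have hE2R : x * G.toReal + F0.toReal = F.toReal + x * F0.toReal := by
    have := congrArg ENNReal.toReal hE2
    rwa [ENNReal.toReal_add (ENNReal.mul_ne_top hvfin hGfin) hF0fin,
      ENNReal.toReal_add hFfin (ENNReal.mul_ne_top hvfin hF0fin),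
      ENNReal.toReal_mul, ENNReal.toReal_mul, hvR] at this
  -- assemble
  rw [← hFR, ← hAvR, ← hF0R]
  have hxne : x ≠ 0 := ne_of_gt hx0
  field_simp
  linear_combination x * hE1R + (z * Av.toReal) * hE2R

end Main

/-- for the single-server queue with i.i.d. arrivals of generating function
`A`, the full bivariate generating function equals
`Φ(u,z) = (1 + z·A(u)·(1 - 1/u)/(1 - T_A(z))) / (1 - z·A(u)/u)`
for `u ≠ 0` in the domain of convergence (where the denominator does not vanish),
with `T_A(z) = z·A(T_A(z))`, `T_A(0) = 0`. -/
theorem single_queue_bivariate_gf {Ω : Type*} [MeasurableSpace Ω] (μ : Measure Ω)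
    [IsProbabilityMeasure μ]
    (A : ℕ → Ω → ℕ) (hmeas : ∀ t, Measurable (A t))
    (hindep : iIndepFun A μ)
    (hid : ∀ t, μ.map (A t) = μ.map (A 0))
    (X : ℕ → Ω → ℕ)
    (hX0 : ∀ ω, X 0 ω = 0)
    (hXrec : ∀ t ω, X (t + 1) ω = (X t ω - 1) + A (t + 1) ω)
    (a : ℕ → ℝ) (ha : ∀ n, a n = (μ {ω | A 0 ω = n}).toReal)
    (tc : ℕ → ℝ) (htc0 : tc 0 = 0) (htcpos : ∀ n, 0 ≤ tc n)
    (htcsum : ∀ z ∈ Set.Icc (0 : ℝ) 1, Summable fun n => tc n * z ^ n)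
    (hfix : ∀ z ∈ Set.Icc (0 : ℝ) 1,
      (∑' n, tc n * z ^ n) = z * ∑' n, a n * (∑' k, tc k * z ^ k) ^ n)
    (Φ : ℝ → ℝ → ℝ)
    (hΦ : ∀ u z, Φ u z
      = ∑' t : ℕ, (∑' n : ℕ, (μ {ω | X t ω = n}).toReal * u ^ n) * z ^ t) :
    ∀ u ∈ Set.Ioo (0 : ℝ) 1, ∀ z ∈ Set.Ioo (0 : ℝ) 1,
      z * (∑' n, a n * u ^ n) / u ≠ 1 →
      Φ u z = (1 + z * (∑' n, a n * u ^ n) * (1 - 1 / u) / (1 - ∑' n, tc n * z ^ n))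
                / (1 - z * (∑' n, a n * u ^ n) / u) := by
  intro u hu z hz hden
  obtain ⟨hu0, hu1⟩ := hu
  obtain ⟨hz0, hz1⟩ := hz
  have hauni : ∀ x : ℝ, (∑' n, a n * x ^ n)
      = ∑' m : ℕ, (μ {ω | A 0 ω = m}).toReal * x ^ m :=
    fun x => tsum_congr fun n => by rw [ha]
  set T : ℝ := ∑' n, tc n * z ^ n with hT
  have hasum1 : (∑' n, a n) = 1 := by
    calc (∑' n, a n) = ∑' m : ℕ, (μ {ω | A 0 ω = m}).toReal := tsum_congr fun n => ha n
      _ = (∑' m : ℕ, μ {ω | A 0 ω = m}).toReal :=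
          (ENNReal.tsum_toReal_eq fun m => measure_ne_top μ _).symm
      _ = 1 := by rw [queue_tsum_one (hmeas 0), ENNReal.toReal_one]
  have hTnn : 0 ≤ T := tsum_nonneg fun n => mul_nonneg (htcpos n) (pow_nonneg hz0.le n)
  have hTlt : T < 1 := by
    by_contra hcon
    push_neg at hcon
    have hcont : ContinuousOn (fun y : ℝ => ∑' n, tc n * y ^ n) (Set.Icc 0 1) := by
      rw [continuousOn_iff_continuous_restrict]
      refine continuous_tsum (fun n => ?_) (by simpa using htcsum 1 (by norm_num))
        (fun n y => ?_)
      · exact continuous_const.mul ((continuous_pow n).comp continuous_subtype_val)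
      · obtain ⟨hy1, hy2⟩ := y.2
        rw [Real.norm_eq_abs, abs_mul, abs_of_nonneg (htcpos n), abs_pow,
          abs_of_nonneg hy1]
        simpa using mul_le_of_le_one_right (htcpos n) (pow_le_one₀ hy1 hy2)
      
    have hsub : ContinuousOn (fun y : ℝ => ∑' n, tc n * y ^ n) (Set.Icc 0 z) :=
      hcont.mono (Set.Icc_subset_Icc le_rfl hz1.le)
    have h0 : (∑' n, tc n * (0:ℝ) ^ n) = 0 := by
      have hz' : ∀ n, tc n * (0:ℝ) ^ n = 0 := by
        intro n
        cases n with
        | zero => simp [htc0]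
        | succ k => simp
      rw [tsum_congr hz', tsum_zero]
    have h1mem : (1:ℝ) ∈ Set.Icc ((fun y : ℝ => ∑' n, tc n * y ^ n) 0)
        ((fun y : ℝ => ∑' n, tc n * y ^ n) z) := by
      constructor
      · simpa [h0] using zero_le_one
      · simpa using hcon
    obtain ⟨y, hy, hyv⟩ := intermediate_value_Icc hz0.le hsub h1mem
    have hy1 : y ∈ Set.Icc (0:ℝ) 1 := ⟨hy.1, hy.2.trans hz1.le⟩
    have hfy := hfix y hy1
    simp only at hyv
    rw [hyv] at hfy
    have hsum1 : (∑' n, a n * (1:ℝ) ^ n) = 1 := by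
      simpa [one_pow, mul_one] using hasum1
    rw [hsum1, mul_one] at hfy
    have : y ≤ z := hy.2
    linarith
  have hTne : (1:ℝ) - T ≠ 0 := by linarith
  have hF0val : (∑' t : ℕ, (μ {ω | X t ω = 0}).toReal * z ^ t) = 1 / (1 - T) := by
    rcases eq_or_lt_of_le hTnn with h0T | h0T
    · -- T = 0
      have ha0 : a 0 = 0 := by
        have hfz := hfix z ⟨hz0.le, hz1.le⟩
        rw [← hT, ← h0T] at hfz
        have hsum0 : (∑' n, a n * (0:ℝ) ^ n) = a 0 := by
          rw [tsum_eq_single 0 (fun b hb => by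
            cases b with
            | zero => exact absurd rfl hb
            | succ k => simp)]
          simp
        rw [hsum0] at hfz
        exact ((mul_eq_zero.mp hfz.symm).resolve_left hz0.ne').symm ▸ rfl
      have hα0 : μ {ω | A 0 ω = 0} = 0 := by
        have h1 : (μ {ω | A 0 ω = 0}).toReal = 0 := by rw [← ha 0]; exact ha0
        exact ((ENNReal.toReal_eq_zero_iff _).mp h1).resolve_right (measure_ne_top μ _)
      have hq0 : ∀ t, μ {ω | X (t + 1) ω = 0} = 0 := by
        intro t
        have hsubset : {ω | X (t + 1) ω = 0} ⊆ {ω | A (t + 1) ω = 0} := by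
          intro ω h
          simp only [Set.mem_setOf_eq] at h ⊢
          have := hXrec t ω
          omega
        have hA1 : μ {ω | A (t + 1) ω = 0} = 0 := by
          rw [queue_A_id hmeas hid]
          exact hα0
        exact le_antisymm (hA1 ▸ measure_mono hsubset) zero_le
      have hF01 : (∑' t : ℕ, (μ {ω | X t ω = 0}).toReal * z ^ t) = 1 := by
        rw [tsum_eq_single 0 (fun b hb => by
          cases b with
          | zero => exact absurd rfl hb
          | succ k => simp [hq0 k])]
        have : {ω | X 0 ω = 0} = Set.univ := by ext ω; simp [hX0]
        simp [this]
      rw [hF01, ← h0T]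
      norm_num
    · -- 0 < T : kernel method
      have hmain := queue_main (μ := μ) hmeas hindep hid hX0 hXrec h0T hTlt.le hz0 hz1
      have hAT : z * (∑' m : ℕ, (μ {ω | A 0 ω = m}).toReal * T ^ m) = T := by
        have hfz := hfix z ⟨hz0.le, hz1.le⟩
        rw [← hT] at hfz
        rw [← hauni T]
        exact hfz.symm
      have hker : 1 - z * (∑' m : ℕ, (μ {ω | A 0 ω = m}).toReal * T ^ m) / T = 0 := by
        rw [hAT, div_self h0T.ne']
        ring
      rw [hker, mul_zero] at hmain
      have hco : z * (∑' m : ℕ, (μ {ω | A 0 ω = m}).toReal * T ^ m) * (1 - 1 / T)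
          = T - 1 := by
        rw [hAT]
        field_simp
      rw [hco] at hmain
      have h1 : (1 - T) * (∑' t : ℕ, (μ {ω | X t ω = 0}).toReal * z ^ t) = 1 := by
        nlinarith [hmain]
      rw [eq_div_iff hTne]
      linarith [h1]
  -- final assembly
  have hmain := queue_main (μ := μ) hmeas hindep hid hX0 hXrec hu0 hu1.le hz0 hz1
  rw [hΦ, hauni u]
  have hne : 1 - z * (∑' m : ℕ, (μ {ω | A 0 ω = m}).toReal * u ^ m) / u ≠ 0 := by
    rw [hauni u] at hden
    exact sub_ne_zero.mpr fun h => hden h.symm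
  rw [eq_div_iff hne, hmain, hF0val]
  ring
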